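/- Let ℓ be a prime and T, t, s integers with s ≥ t ≥ T ≥ 0. Let Γ(ℓ^T) = {γ ∈ GL₂(ℤ_ℓ) : γ ≡ I₂ (mod ℓ^T)} denote the principal congruence subgroup of level ℓ^T. Then K₁^{GL₂}(ℓ^T, ℓ^T) = Γ(ℓ^T) · K₁^{GL₂}(ℓ^s, ℓ^t); in other words, every left coset of K₁^{GL₂}(ℓ^s, ℓ^t) in K₁^{GL₂}(ℓ^T, ℓ^T) contains a representative congruent to the identity modulo ℓ^T. -/

import Mathlib

open Pointwise

noncomputable section

/-- `K₁^{GL₂}(ℓ^s, ℓ^t)`: matrices `[[a,b],[c,d]] ∈ GL₂(ℤ_ℓ)` (unit determinant) with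
`c ≡ 0 (mod ℓ^s)` and `d ≡ 1 (mod ℓ^t)`. -/
def K1 (p : ℕ) [Fact p.Prime] (s t : ℕ) : Set (Matrix (Fin 2) (Fin 2) ℤ_[p]) :=
  {g | IsUnit g.det ∧ (p : ℤ_[p]) ^ s ∣ g 1 0 ∧ (p : ℤ_[p]) ^ t ∣ (g 1 1 - 1)}

/-- The principal congruence subgroup `Γ(ℓ^T) = {γ ∈ GL₂(ℤ_ℓ) : γ ≡ I₂ (mod ℓ^T)}`. -/
def Gamma (p : ℕ) [Fact p.Prime] (T : ℕ) : Set (Matrix (Fin 2) (Fin 2) ℤ_[p]) :=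
  {γ | IsUnit γ.det ∧ (p : ℤ_[p]) ^ T ∣ (γ 0 0 - 1) ∧ (p : ℤ_[p]) ^ T ∣ γ 0 1 ∧
    (p : ℤ_[p]) ^ T ∣ γ 1 0 ∧ (p : ℤ_[p]) ^ T ∣ (γ 1 1 - 1)}

lemma isUnit_of_not_dvd {p : ℕ} [Fact p.Prime] {a : ℤ_[p]} (h : ¬ (p : ℤ_[p]) ∣ a) :
    IsUnit a := by
  rw [PadicInt.isUnit_iff]
  rcases lt_or_eq_of_le (PadicInt.norm_le_one a) with h1 | h1
  · exact absurd ((PadicInt.norm_lt_one_iff_dvd a).mp h1) h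
  · exact h1

lemma unit_top_left {p : ℕ} [Fact p.Prime] {a b c d : ℤ_[p]} (hdet : IsUnit (a * d - b * c))
    (hc : (p : ℤ_[p]) ∣ c) : IsUnit a := by
  apply isUnit_of_not_dvd
  intro ha
  have : (p : ℤ_[p]) ∣ (a * d - b * c) := by
    exact dvd_sub (ha.mul_right d) (Dvd.dvd.mul_left hc b)
  have hpu : IsUnit ((p : ℤ_[p])) := isUnit_of_dvd_unit this hdet
  rw [PadicInt.isUnit_iff, PadicInt.norm_p, inv_eq_one] at hpu
  exact absurd (by exact_mod_cast hpu : p = 1) (Nat.Prime.ne_one Fact.out)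

/-- For `s ≥ t ≥ T ≥ 0`, `K₁^{GL₂}(ℓ^T, ℓ^T) = Γ(ℓ^T) · K₁^{GL₂}(ℓ^s, ℓ^t)`; i.e. every
left `K₁^{GL₂}(ℓ^s, ℓ^t)`-coset in `K₁^{GL₂}(ℓ^T, ℓ^T)` has a representative congruent to
the identity modulo `ℓ^T`. -/
theorem stmt19 (p : ℕ) [Fact p.Prime] (T t s : ℕ) (hTt : T ≤ t) (hts : t ≤ s) :
    K1 p T T = Gamma p T * K1 p s t ∧
    ∀ g ∈ K1 p T T, ∃ γ ∈ Gamma p T, γ ∈ ({g} : Set (Matrix (Fin 2) (Fin 2) ℤ_[p])) * K1 p s t := by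
  have hTs : T ≤ s := hTt.trans hts
  -- membership of the product in K1 T T
  have prod_mem : ∀ γ ∈ Gamma p T, ∀ k ∈ K1 p s t, γ * k ∈ K1 p T T := by
    rintro γ ⟨hγd, h00, h01, h10, h11⟩ k ⟨hkd, k10, k11⟩
    have k10T : (p : ℤ_[p]) ^ T ∣ k 1 0 := dvd_trans (pow_dvd_pow _ hTs) k10
    have k11T : (p : ℤ_[p]) ^ T ∣ (k 1 1 - 1) := dvd_trans (pow_dvd_pow _ hTt) k11
    refine ⟨by rw [Matrix.det_mul]; exact hγd.mul hkd, ?_, ?_⟩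
    · have : (γ * k) 1 0 = γ 1 0 * k 0 0 + γ 1 1 * k 1 0 := by
        simp [Matrix.mul_apply, Fin.sum_univ_two]
      rw [this]
      exact dvd_add (h10.mul_right _) (Dvd.dvd.mul_left k10T _)
    · have : (γ * k) 1 1 - 1 = γ 1 0 * k 0 1 + (γ 1 1 - 1) * k 1 1 + (k 1 1 - 1) := by
        simp [Matrix.mul_apply, Fin.sum_univ_two]; ring
      rw [this]
      exact dvd_add (dvd_add (h10.mul_right _) (h11.mul_right _)) k11T
  -- decomposition: every g in K1 T T is γ * k with γ ≡ 1 mod p^T and k ∈ K1 s t,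
  -- moreover γ = g * m with m ∈ K1 s t.
  have decomp : ∀ g ∈ K1 p T T, ∃ γ ∈ Gamma p T, ∃ k ∈ K1 p s t, ∃ m ∈ K1 p s t,
      γ * k = g ∧ g * m = γ := by
    rintro g ⟨hgd, hc, hd⟩
    rcases Nat.eq_zero_or_pos T with hT | hT
    · refine ⟨g, ⟨hgd, by simp [hT], by simp [hT], by simp [hT], by simp [hT]⟩,
        1, ⟨by simp, by simp, by simp⟩, 1, ⟨by simp, by simp, by simp⟩, by simp, by simp⟩
    · set a := g 0 0 with ha_def
      set b := g 0 1 with hb_def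
      set c := g 1 0 with hc_def
      set d := g 1 1 with hd_def
      have hcp : (p : ℤ_[p]) ∣ c := dvd_trans (dvd_pow_self (p : ℤ_[p]) hT.ne') hc
      have hdet2 : g.det = a * d - b * c := by
        rw [Matrix.det_fin_two]
      have ha : IsUnit a := unit_top_left (hdet2 ▸ hgd) hcp
      obtain ⟨u, hu⟩ := ha
      have huv : (↑u⁻¹ : ℤ_[p]) * a = 1 := by rw [← hu]; exact u.inv_mul
      have hvu : a * (↑u⁻¹ : ℤ_[p]) = 1 := by rw [← hu]; exact u.mul_inv
      set m : Matrix (Fin 2) (Fin 2) ℤ_[p] := Matrix.of ![![(↑u⁻¹ : ℤ_[p]), -(↑u⁻¹ * b)], ![0, 1]]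
      set k : Matrix (Fin 2) (Fin 2) ℤ_[p] := Matrix.of ![![a, b], ![0, 1]]
      have hmk : m * k = 1 := by
        ext i j
        fin_cases i <;> fin_cases j <;>
          simp [m, k, Matrix.mul_apply, Fin.sum_univ_two, huv]
      have e00 : (g * m) 0 0 = a * ↑u⁻¹ := by
        simp [m, Matrix.mul_apply, Fin.sum_univ_two, ← ha_def, ← hb_def]
      have e01 : (g * m) 0 1 = -(a * ↑u⁻¹ * b) + b := by
        simp [m, Matrix.mul_apply, Fin.sum_univ_two, ← ha_def, ← hb_def]
        try ring
      have e10 : (g * m) 1 0 = c * ↑u⁻¹ := by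
        simp [m, Matrix.mul_apply, Fin.sum_univ_two, ← hc_def, ← hd_def]
      have e11 : (g * m) 1 1 = -(c * (↑u⁻¹ * b)) + d := by
        simp [m, Matrix.mul_apply, Fin.sum_univ_two, ← hc_def, ← hd_def]
        try ring
      have hγ : g * m ∈ Gamma p T := by
        refine ⟨?_, ?_, ?_, ?_, ?_⟩
        · rw [Matrix.det_mul]
          refine hgd.mul ?_
          have : m.det = (↑u⁻¹ : ℤ_[p]) := by simp [m, Matrix.det_fin_two]
          rw [this]; exact (IsUnit.of_mul_eq_one _ huv)
        · rw [e00, hvu]; simp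
        · rw [e01, hvu]; simp
        · rw [e10]
          exact hc.mul_right _
        · have : (g * m) 1 1 - 1 = -(c * (↑u⁻¹ * b)) + (d - 1) := by rw [e11]; ring
          rw [this]
          exact dvd_add ((hc.mul_right _).neg_right) hd
      have hk : k ∈ K1 p s t := by
        refine ⟨?_, ?_, ?_⟩
        · have : k.det = a := by simp [k, Matrix.det_fin_two]
          rw [this]; exact ⟨u, hu⟩
        · simp [k]
        · simp [k]
      have hm : m ∈ K1 p s t := by
        refine ⟨?_, ?_, ?_⟩
        · have : m.det = (↑u⁻¹ : ℤ_[p]) := by simp [m, Matrix.det_fin_two]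
          rw [this]; exact IsUnit.of_mul_eq_one _ huv
        · simp [m]
        · simp [m]
      exact ⟨g * m, hγ, k, hk, m, hm, by rw [mul_assoc, hmk, mul_one], rfl⟩
  constructor
  · ext g
    constructor
    · intro hg
      obtain ⟨γ, hγ, k, hk, m, hm, hgk, _⟩ := decomp g hg
      exact Set.mem_mul.mpr ⟨γ, hγ, k, hk, hgk⟩
    · intro hg
      obtain ⟨γ, hγ, k, hk, hgk⟩ := Set.mem_mul.mp hg
      rw [← hgk]
      exact prod_mem γ hγ k hk
  · intro g hg
    obtain ⟨γ, hγ, k, hk, m, hm, _, hgm⟩ := decomp g hg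
    exact ⟨γ, hγ, Set.mem_mul.mpr ⟨g, rfl, m, hm, hgm⟩⟩
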